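/- A loopless matroid M has the property that its CI-structure [[M]] is a gaussoid (i.e. satisfies (SG), (Int), (Comp) and (WT)) if and only if M is isomorphic to a direct sum of copies of the uniform matroids U_{1,1} and U_{1,2}. -/

import Mathlib

open Finset

/-- A matroid on a finite ground set `E`, given by its rank function. -/
structure FinMatroid (α : Type*) [DecidableEq α] where
  E : Finset α
  r : Finset α → ℕ
  r_empty : r ∅ = 0
  r_le_card : ∀ ⦃A⦄, A ⊆ E → r A ≤ A.card
  r_mono : ∀ ⦃A B : Finset α⦄, A ⊆ B → B ⊆ E → r A ≤ r B
  r_submod : ∀ ⦃A B : Finset α⦄, A ⊆ E → B ⊆ E → r (A ∪ B) + r (A ∩ B) ≤ r A + r B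

namespace FinMatroid

variable {α : Type*} [DecidableEq α]

/-- A set is independent if it is subcardinal-tight for the rank function. -/
def Indep (M : FinMatroid α) (S : Finset α) : Prop := S ⊆ M.E ∧ M.r S = S.card

/-- A circuit is a minimal dependent set. -/
def Circuit (M : FinMatroid α) (C : Finset α) : Prop :=
  C ⊆ M.E ∧ M.r C < C.card ∧ ∀ S, S ⊂ C → M.r S = S.card

/-- `B` is a basis of `S` if it is a maximal independent subset of `S`. -/
def BasisOf (M : FinMatroid α) (B S : Finset α) : Prop :=
  B ⊆ S ∧ M.Indep B ∧ ∀ x ∈ S, x ∉ B → ¬ M.Indep (insert x B)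

/-- The conditional independence statement `(ij|K)` holds in `M`:
`r(iK) + r(jK) = r(ijK) + r(K)`. -/
def CI (M : FinMatroid α) (i j : α) (K : Finset α) : Prop :=
  M.r (insert i K) + M.r (insert j K) = M.r (insert i (insert j K)) + M.r K

/-- A matroid is loopless if every singleton of the ground set is independent. -/
def Loopless (M : FinMatroid α) : Prop := ∀ e ∈ M.E, M.r {e} = 1

end FinMatroid

/-- Well-formedness of a CI-statement `(ij|K)` on ground set `E`. -/
def wfCI {α : Type*} [DecidableEq α] (E : Finset α) (i j : α) (K : Finset α) : Prop :=
  i ∈ E ∧ j ∈ E ∧ i ≠ j ∧ i ∉ K ∧ j ∉ K ∧ K ⊆ E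

/-- The CI-structure `[[M]]` of a matroid, as a predicate on CI-statements. -/
def FinMatroid.ciOf {α : Type*} [DecidableEq α] (M : FinMatroid α) :
    α → α → Finset α → Prop :=
  fun i j K => wfCI M.E i j K ∧ M.CI i j K

/-- Well-formedness of the data `i, j, ℓ, K` of an inference-rule instance:
`i, j, ℓ` are pairwise distinct elements of `E` and `K ⊆ E` is disjoint
from them. -/
def wf3 {α : Type*} [DecidableEq α] (E : Finset α) (i j ℓ : α) (K : Finset α) : Prop :=
  i ∈ E ∧ j ∈ E ∧ ℓ ∈ E ∧ i ≠ j ∧ i ≠ ℓ ∧ j ≠ ℓ ∧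
    i ∉ K ∧ j ∉ K ∧ ℓ ∉ K ∧ K ⊆ E

/-- A CI-structure on `E`: a (symmetric) set of well-formed CI-statements. -/
def IsCIStructOn {α : Type*} [DecidableEq α] (E : Finset α)
    (G : α → α → Finset α → Prop) : Prop :=
  (∀ i j K, G i j K → wfCI E i j K) ∧ (∀ i j K, G i j K → G j i K)

/-- The axiom (MCI): `(ij|K) ∉ G` implies `(iℓ|jKL) ∈ G`. -/
def MCIax {α : Type*} [DecidableEq α] (E : Finset α)
    (G : α → α → Finset α → Prop) : Prop :=
  ∀ i j ℓ K L, wf3 E i j ℓ K →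
    L ⊆ E \ (insert i (insert j (insert ℓ K))) →
    ¬ G i j K → G i ℓ (insert j (K ∪ L))

/-- The semigraphoid axiom (SG): `(ij|K) ∈ G` and `(iℓ|jK) ∈ G` imply
`(iℓ|K) ∈ G` and `(ij|ℓK) ∈ G`. -/
def SGax {α : Type*} [DecidableEq α] (E : Finset α)
    (G : α → α → Finset α → Prop) : Prop :=
  ∀ i j ℓ K, wf3 E i j ℓ K →
    G i j K → G i ℓ (insert j K) → G i ℓ K ∧ G i j (insert ℓ K)

/-- The intersection axiom (Int). -/
def IntAx {α : Type*} [DecidableEq α] (E : Finset α)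
    (G : α → α → Finset α → Prop) : Prop :=
  ∀ i j k L, wf3 E i j k L →
    G i j (insert k L) → G i k (insert j L) → G i j L ∧ G i k L

/-- The composition axiom (Comp). -/
def CompAx {α : Type*} [DecidableEq α] (E : Finset α)
    (G : α → α → Finset α → Prop) : Prop :=
  ∀ i j k L, wf3 E i j k L →
    G i j L → G i k L → G i j (insert k L) ∧ G i k (insert j L)

/-- The weak transitivity axiom (WT). -/
def WTAx {α : Type*} [DecidableEq α] (E : Finset α)
    (G : α → α → Finset α → Prop) : Prop :=
  ∀ i j k L, wf3 E i j k L →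
    G i j L → G i j (insert k L) → G i k L ∨ G j k L

section Helpers

variable {α : Type*} [DecidableEq α] (M : FinMatroid α)

lemma r_single (hM : M.Loopless) {i : α} (hi : i ∈ M.E) : M.r {i} = 1 := hM i hi

lemma r_insert_mono {i : α} {A : Finset α} (hi : i ∈ M.E) (hA : A ⊆ M.E) :
    M.r A ≤ M.r (insert i A) :=
  M.r_mono (Finset.subset_insert i A) (Finset.insert_subset hi hA)

lemma r_insert_le (hM : M.Loopless) {i : α} {A : Finset α} (hi : i ∈ M.E) (hA : A ⊆ M.E) :
    M.r (insert i A) ≤ M.r A + 1 := by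
  have hsub : M.r ({i} ∪ A) + M.r ({i} ∩ A) ≤ M.r {i} + M.r A :=
    M.r_submod (by simpa using hi) hA
  have h1 : ({i} : Finset α) ∪ A = insert i A := by rw [Finset.insert_eq]
  rw [h1, r_single M hM hi] at hsub
  omega

lemma r_pair_pos (hM : M.Loopless) {i j : α} (hi : i ∈ M.E) (hj : j ∈ M.E) :
    1 ≤ M.r {i, j} := by
  have := M.r_mono (show ({i} : Finset α) ⊆ {i, j} by simp)
    (by simp [Finset.insert_subset, hi, hj])
  rw [r_single M hM hi] at this
  exact this

lemma parallel_trans (hM : M.Loopless) {i j k : α} (hi : i ∈ M.E) (hj : j ∈ M.E)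
    (hk : k ∈ M.E) (hij : M.r {i, j} ≤ 1) (hjk : M.r {j, k} ≤ 1) : M.r {i, k} ≤ 1 := by
  have hij' : ({i, j} : Finset α) ⊆ M.E := by simp [Finset.insert_subset, hi, hj]
  have hjk' : ({j, k} : Finset α) ⊆ M.E := by simp [Finset.insert_subset, hj, hk]
  have hsub := M.r_submod hij' hjk'
  have hU : ({i, j} : Finset α) ∪ {j, k} = {i, j, k} := by
    ext a; constructor <;> intro h <;> simp at h ⊢ <;> tauto
  have hIn : ({j} : Finset α) ⊆ {i, j} ∩ {j, k} := by simp
  have hIE : ({i, j} : Finset α) ∩ {j, k} ⊆ M.E := fun a ha => hij' (Finset.mem_inter.1 ha).1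
  have h2 : 1 ≤ M.r ({i, j} ∩ {j, k}) := by
    have := M.r_mono hIn hIE; rw [r_single M hM hj] at this; exact this
  rw [hU] at hsub
  have h3 : M.r {i, k} ≤ M.r {i, j, k} := by
    apply M.r_mono (by intro a ha; simp at ha ⊢; tauto)
    simp [Finset.insert_subset, hi, hj, hk]
  omega

lemma r_triple_le_one (hM : M.Loopless) {i j k : α} (hi : i ∈ M.E) (hj : j ∈ M.E)
    (hk : k ∈ M.E) (hij : M.r {i, j} ≤ 1) (hjk : M.r {j, k} ≤ 1) : M.r {i, j, k} ≤ 1 := by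
  have hij' : ({i, j} : Finset α) ⊆ M.E := by simp [Finset.insert_subset, hi, hj]
  have hjk' : ({j, k} : Finset α) ⊆ M.E := by simp [Finset.insert_subset, hj, hk]
  have hsub := M.r_submod hij' hjk'
  have hU : ({i, j} : Finset α) ∪ {j, k} = {i, j, k} := by ext a; constructor <;> intro h <;> simp at h ⊢ <;> tauto
  have hIE : ({i, j} : Finset α) ∩ {j, k} ⊆ M.E := fun a ha => hij' (Finset.mem_inter.1 ha).1
  have h2 : 1 ≤ M.r ({i, j} ∩ {j, k}) := by
    have := M.r_mono (show ({j} : Finset α) ⊆ {i,j} ∩ {j,k} by simp) hIE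
    rw [r_single M hM hj] at this; exact this
  rw [hU] at hsub; omega

end Helpers
section KeyLemmas

variable {α : Type*} [DecidableEq α] (M : FinMatroid α)

lemma submod_pairins {i k : α} {L : Finset α} (hi : i ∈ M.E) (hk : k ∈ M.E)
    (hL : L ⊆ M.E) (hik : i ≠ k) (hiL : i ∉ L) (hkL : k ∉ L) :
    M.r (insert i (insert k L)) + M.r L ≤ M.r (insert i L) + M.r (insert k L) := by
  have h1 : insert i L ∪ insert k L = insert i (insert k L) := by
    ext a; constructor <;> intro h <;> simp at h ⊢ <;> tauto
  have h2 : insert i L ∩ insert k L = L := by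
    ext a; constructor <;> intro h <;> simp at h ⊢
    · rcases h with ⟨h3 | h3, h4 | h4⟩ <;> first | assumption | (exfalso; subst h3; tauto)
    · tauto
  have := M.r_submod (Finset.insert_subset hi hL) (Finset.insert_subset hk hL)
  rw [h1, h2] at this; exact this

/-- Key lemma: if (Comp) holds for `[[M]]` and `i` depends on `S`, then `i` is
parallel to some element of `S`. -/
lemma dep_parallel (hM : M.Loopless)
    (hComp : CompAx M.E (fun i j K => M.CI i j K)) :
    ∀ S : Finset α, S ⊆ M.E → ∀ i ∈ M.E, i ∉ S →
      M.r (insert i S) = M.r S → ∃ j ∈ S, M.r {i, j} ≤ 1 := by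
  intro S
  induction S using Finset.strongInduction with
  | _ S IH =>
  intro hSE i hiE hiS hdep
  by_cases hrec : ∃ k ∈ S, M.r (insert i (S.erase k)) = M.r (S.erase k)
  · obtain ⟨k, hkS, hk⟩ := hrec
    obtain ⟨j, hj, hjp⟩ := IH (S.erase k) (Finset.erase_ssubset hkS)
      ((Finset.erase_subset k S).trans hSE) i hiE
      (fun h => hiS (Finset.mem_of_mem_erase h)) hk
    exact ⟨j, Finset.mem_of_mem_erase hj, hjp⟩
  · push_neg at hrec
    -- every erase step is a strict increase
    have hstep : ∀ k ∈ S, M.r (insert i (S.erase k)) = M.r (S.erase k) + 1 := by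
      intro k hk
      have h1 := r_insert_le M hM hiE ((Finset.erase_subset k S).trans hSE)
      have h2 := r_insert_mono M hiE ((Finset.erase_subset k S).trans hSE)
        (i := i) (A := S.erase k)
      have := hrec k hk
      omega
    rcases S.eq_empty_or_nonempty with hSe | ⟨k, hkS⟩
    · subst hSe
      have he : insert i (∅ : Finset α) = {i} := by simp
      rw [he, r_single M hM hiE, M.r_empty] at hdep
      omega
    rcases (S.erase k).eq_empty_or_nonempty with hek | ⟨k', hk'⟩
    · -- S = {k}
      have hSk : S = {k} := by
        apply Finset.eq_singleton_iff_unique_mem.2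
        refine ⟨hkS, fun x hx => ?_⟩
        by_contra hxk
        exact absurd (Finset.mem_erase.2 ⟨hxk, hx⟩) (by rw [hek]; simp)
      refine ⟨k, hkS, ?_⟩
      have : M.r {i, k} = M.r S := by rw [hSk] at hdep ⊢; exact hdep
      rw [this, hSk, r_single M hM (hSE hkS)]
    · have hk'S : k' ∈ S := Finset.mem_of_mem_erase hk'
      have hkk' : k' ≠ k := (Finset.mem_erase.1 hk').1
      set L := (S.erase k).erase k' with hLdef
      have hLS : L ⊆ S := (Finset.erase_subset _ _).trans (Finset.erase_subset _ _)
      have hLE : L ⊆ M.E := hLS.trans hSE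
      have hiL : i ∉ L := fun h => hiS (hLS h)
      have hkL : k ∉ L := fun h => (Finset.mem_erase.1 (Finset.mem_of_mem_erase h)).1 rfl
      have hk'L : k' ∉ L := fun h => (Finset.mem_erase.1 h).1 rfl
      have hik : i ≠ k := fun h => hiS (h ▸ hkS)
      have hik' : i ≠ k' := fun h => hiS (h ▸ hk'S)
      have hins1 : insert k' L = S.erase k := by
        rw [hLdef, Finset.insert_erase hk']
      have hins2 : insert k L = S.erase k' := by
        rw [hLdef, Finset.erase_right_comm, Finset.insert_erase
          (Finset.mem_erase.2 ⟨fun h => hkk' h.symm, hkS⟩)]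
      have hins3 : insert k (S.erase k) = S := Finset.insert_erase hkS
      -- ranks
      have hrS : M.r S = M.r (S.erase k) + 1 := by
        have h1 := hstep k hkS
        have h2 : M.r (insert i (S.erase k)) ≤ M.r (insert i S) :=
          M.r_mono (Finset.insert_subset_insert i (Finset.erase_subset k S))
            (Finset.insert_subset hiE hSE)
        have h3 : M.r S ≤ M.r (S.erase k) + 1 := by
          conv_lhs => rw [← hins3]
          exact r_insert_le M hM (hSE hkS) ((Finset.erase_subset k S).trans hSE)
        omega
      have hCIfail : ¬ M.CI i k (S.erase k) := by
        unfold FinMatroid.CI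
        rw [hins3, hstep k hkS, hdep]
        intro h
        omega
      have hwf : wf3 M.E i k k' L :=
        ⟨hiE, hSE hkS, hSE hk'S, hik, hik', fun h => hkk' h.symm, hiL, hkL, hk'L, hLE⟩
      have hcases : ¬ M.CI i k L ∨ ¬ M.CI i k' L := by
        by_contra h
        push_neg at h
        have := (hComp i k k' L hwf h.1 h.2).1
        rw [hins1] at this
        exact hCIfail this
      exfalso
      rcases hcases with hfail | hfail
      · -- contradiction with hstep k'
        have hsub := submod_pairins M hiE (hSE hkS) hLE hik hiL hkL
        have hup : M.r (insert i L) ≤ M.r L + 1 := r_insert_le M hM hiE hLE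
        have hmono : M.r (insert k L) ≤ M.r (insert i (insert k L)) :=
          r_insert_mono M hiE (Finset.insert_subset (hSE hkS) hLE)
        have hne : M.r (insert i L) + M.r (insert k L) ≠
            M.r (insert i (insert k L)) + M.r L := hfail
        have heq : M.r (insert i (insert k L)) = M.r (insert k L) := by omega
        rw [hins2] at heq
        have := hstep k' hk'S
        omega
      · have hsub := submod_pairins M hiE (hSE hk'S) hLE hik' hiL hk'L
        have hup : M.r (insert i L) ≤ M.r L + 1 := r_insert_le M hM hiE hLE
        have hmono : M.r (insert k' L) ≤ M.r (insert i (insert k' L)) :=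
          r_insert_mono M hiE (Finset.insert_subset (hSE hk'S) hLE)
        have hne : M.r (insert i L) + M.r (insert k' L) ≠
            M.r (insert i (insert k' L)) + M.r L := hfail
        have heq : M.r (insert i (insert k' L)) = M.r (insert k' L) := by omega
        rw [hins1] at heq
        have := hstep k hkS
        omega

end KeyLemmas
section NoThree

variable {α : Type*} [DecidableEq α] (M : FinMatroid α)

lemma no_three_parallel (hM : M.Loopless)
    (hInt : IntAx M.E (fun i j K => M.CI i j K)) {x y z : α}
    (hx : x ∈ M.E) (hy : y ∈ M.E) (hz : z ∈ M.E)
    (hxy : x ≠ y) (hxz : x ≠ z) (hyz : y ≠ z)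
    (pxy : M.r {x, y} ≤ 1) (pxz : M.r {x, z} ≤ 1) (pyz : M.r {y, z} ≤ 1) : False := by
  have exy : M.r {x, y} = 1 := le_antisymm pxy (r_pair_pos M hM hx hy)
  have exz : M.r {x, z} = 1 := le_antisymm pxz (r_pair_pos M hM hx hz)
  have eyz : M.r {y, z} = 1 := le_antisymm pyz (r_pair_pos M hM hy hz)
  have pyx : M.r {y, x} ≤ 1 := by rwa [Finset.pair_comm]
  have etr : M.r {x, y, z} = 1 := by
    have h1 := r_triple_le_one M hM hx hy hz pxy pyz
    have h2 : 1 ≤ M.r {x, y, z} := by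
      have := M.r_mono (show ({x} : Finset α) ⊆ {x, y, z} by simp)
        (by simp [Finset.insert_subset, hx, hy, hz])
      rwa [r_single M hM hx] at this
    omega
  have hwf : wf3 M.E x y z ∅ :=
    ⟨hx, hy, hz, hxy, hxz, hyz, by simp, by simp, by simp, by simp⟩
  have h1 : M.CI x y (insert z ∅) := by
    show M.r (insert x {z}) + M.r (insert y {z}) =
      M.r (insert x (insert y {z})) + M.r {z}
    rw [show (insert x {z} : Finset α) = {x, z} from rfl,
      show (insert y {z} : Finset α) = {y, z} from rfl,
      show (insert x (insert y {z}) : Finset α) = {x, y, z} from rfl,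
      exz, eyz, etr, r_single M hM hz]
  have h2 : M.CI x z (insert y ∅) := by
    show M.r (insert x {y}) + M.r (insert z {y}) =
      M.r (insert x (insert z {y})) + M.r {y}
    have e1 : (insert z {y} : Finset α) = {y, z} := Finset.pair_comm z y
    rw [show (insert x {y} : Finset α) = {x, y} from rfl, e1,
      exy, eyz, etr, r_single M hM hy]
  have h0 : M.r (insert x ∅) + M.r (insert y ∅) =
      M.r (insert x (insert y ∅)) + M.r ∅ := (hInt x y z ∅ hwf h1 h2).1
  have hx0 : insert x (∅ : Finset α) = {x} := by simp
  have hy0 : insert y (∅ : Finset α) = {y} := by simp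
  rw [hy0] at h0
  rw [hx0] at h0
  rw [r_single M hM hx, r_single M hM hy, M.r_empty,
    show (insert x {y} : Finset α) = {x, y} from rfl, exy] at h0
  omega

end NoThree
section Counting

variable {α : Type*} [DecidableEq α]

lemma block_unique {B : Finset (Finset α)}
    (hdisj : ∀ b₁ ∈ B, ∀ b₂ ∈ B, b₁ ≠ b₂ → Disjoint b₁ b₂)
    {b₁ b₂ : Finset α} (h1 : b₁ ∈ B) (h2 : b₂ ∈ B) {x : α}
    (hx1 : x ∈ b₁) (hx2 : x ∈ b₂) : b₁ = b₂ := by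
  by_contra h
  exact Finset.disjoint_left.1 (hdisj b₁ h1 b₂ h2 h) hx1 hx2

lemma filter_meet_insert {B : Finset (Finset α)}
    (hdisj : ∀ b₁ ∈ B, ∀ b₂ ∈ B, b₁ ≠ b₂ → Disjoint b₁ b₂)
    {b : Finset α} (hb : b ∈ B) {i : α} (hib : i ∈ b) (S : Finset α) :
    B.filter (fun c => (c ∩ insert i S).Nonempty)
      = insert b (B.filter (fun c => (c ∩ S).Nonempty)) := by
  ext c
  simp only [Finset.mem_filter, Finset.mem_insert]
  constructor
  · rintro ⟨hcB, x, hx⟩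
    rw [Finset.mem_inter, Finset.mem_insert] at hx
    rcases hx with ⟨hxc, rfl | hxS⟩
    · exact Or.inl (block_unique hdisj hcB hb hxc hib)
    · exact Or.inr ⟨hcB, x, Finset.mem_inter.2 ⟨hxc, hxS⟩⟩
  · rintro (rfl | ⟨hcB, x, hx⟩)
    · exact ⟨hb, i, Finset.mem_inter.2 ⟨hib, Finset.mem_insert_self i S⟩⟩
    · rw [Finset.mem_inter] at hx
      exact ⟨hcB, x, Finset.mem_inter.2 ⟨hx.1, Finset.mem_insert_of_mem hx.2⟩⟩

lemma count_insert {B : Finset (Finset α)}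
    (hdisj : ∀ b₁ ∈ B, ∀ b₂ ∈ B, b₁ ≠ b₂ → Disjoint b₁ b₂)
    {b : Finset α} (hb : b ∈ B) {i : α} (hib : i ∈ b) (S : Finset α) :
    (B.filter (fun c => (c ∩ insert i S).Nonempty)).card
      = (B.filter (fun c => (c ∩ S).Nonempty)).card
        + (if (b ∩ S).Nonempty then 0 else 1) := by
  rw [filter_meet_insert hdisj hb hib]
  by_cases h : (b ∩ S).Nonempty
  · have hbmem : b ∈ B.filter (fun c => (c ∩ S).Nonempty) := Finset.mem_filter.2 ⟨hb, h⟩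
    rw [Finset.insert_eq_self.2 hbmem, if_pos h]
    omega
  · have hbmem : b ∉ B.filter (fun c => (c ∩ S).Nonempty) :=
      fun hc => h (Finset.mem_filter.1 hc).2
    rw [Finset.card_insert_of_notMem hbmem, if_neg h]

end Counting

section Backward

variable {α : Type*} [DecidableEq α] (M : FinMatroid α)

/-- In a partition matroid with blocks of size ≤ 2, `(ij|K)` holds iff no block
contains both `i` and `j`. -/
lemma bwd_ci_iff {B : Finset (Finset α)}
    (hBsub : ∀ b ∈ B, b ⊆ M.E)
    (hBdisj : ∀ b₁ ∈ B, ∀ b₂ ∈ B, b₁ ≠ b₂ → Disjoint b₁ b₂)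
    (hBun : B.biUnion id = M.E)
    (hBcard : ∀ b ∈ B, b.card = 1 ∨ b.card = 2)
    (hBr : ∀ S ⊆ M.E, M.r S = (B.filter (fun b => (b ∩ S).Nonempty)).card)
    {i j : α} {K : Finset α} (hi : i ∈ M.E) (hj : j ∈ M.E) (hij : i ≠ j)
    (hiK : i ∉ K) (hjK : j ∉ K) (hK : K ⊆ M.E) :
    M.CI i j K ↔ ∀ b ∈ B, i ∈ b → j ∉ b := by
  obtain ⟨bi, hbi, hibi⟩ : ∃ b ∈ B, i ∈ b := by
    have : i ∈ B.biUnion id := hBun ▸ hi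
    simpa using this
  obtain ⟨bj, hbj, hjbj⟩ : ∃ b ∈ B, j ∈ b := by
    have : j ∈ B.biUnion id := hBun ▸ hj
    simpa using this
  have hKE : K ⊆ M.E := hK
  have hiKE : insert i K ⊆ M.E := Finset.insert_subset hi hK
  have hjKE : insert j K ⊆ M.E := Finset.insert_subset hj hK
  have hijKE : insert i (insert j K) ⊆ M.E := Finset.insert_subset hi hjKE
  have e1 : M.r (insert i K) = (B.filter (fun c => (c ∩ K).Nonempty)).card
      + (if (bi ∩ K).Nonempty then 0 else 1) :=
    (hBr _ hiKE).trans (count_insert hBdisj hbi hibi K)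
  have e2 : M.r (insert j K) = (B.filter (fun c => (c ∩ K).Nonempty)).card
      + (if (bj ∩ K).Nonempty then 0 else 1) :=
    (hBr _ hjKE).trans (count_insert hBdisj hbj hjbj K)
  have e3 : M.r (insert i (insert j K)) =
      (B.filter (fun c => (c ∩ insert j K).Nonempty)).card
      + (if (bi ∩ insert j K).Nonempty then 0 else 1) :=
    (hBr _ hijKE).trans (count_insert hBdisj hbi hibi (insert j K))
  have e4 : (B.filter (fun c => (c ∩ insert j K).Nonempty)).card
      = (B.filter (fun c => (c ∩ K).Nonempty)).card
      + (if (bj ∩ K).Nonempty then 0 else 1) :=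
    count_insert hBdisj hbj hjbj K
  have e0 : M.r K = (B.filter (fun c => (c ∩ K).Nonempty)).card := hBr _ hKE
  unfold FinMatroid.CI
  rw [e1, e2, e3, e4, e0]
  constructor
  · intro h b hb hib
    have hbbi : b = bi := block_unique hBdisj hb hbi hib hibi
    intro hjb
    have hjb' : j ∈ bi := hbbi ▸ hjb
    -- b = {i, j}, so b ∩ K = ∅ but b ∩ insert j K ∋ j
    have hbij : bi = {i, j} := by
      refine (Finset.eq_of_subset_of_card_le ?_ ?_).symm
      · intro a ha
        rcases Finset.mem_insert.1 ha with rfl | ha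
        · exact hibi
        · rwa [Finset.mem_singleton.1 ha]
      · have h2 : ({i, j} : Finset α).card = 2 := Finset.card_pair hij
        rcases hBcard bi hbi with h1 | h1 <;> omega
    have hne : (bi ∩ insert j K).Nonempty :=
      ⟨j, Finset.mem_inter.2 ⟨hjb', Finset.mem_insert_self j K⟩⟩
    have hemp : ¬ (bi ∩ K).Nonempty := by
      rintro ⟨x, hx⟩
      rw [Finset.mem_inter, hbij] at hx
      rcases Finset.mem_insert.1 hx.1 with rfl | hx1
      · exact hiK hx.2
      · exact hjK (Finset.mem_singleton.1 hx1 ▸ hx.2)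
    rw [if_pos hne, if_neg hemp] at h
    omega
  · intro h
    have hjbi : j ∉ bi := h bi hbi hibi
    have : bi ∩ insert j K = bi ∩ K := by
      ext a
      simp only [Finset.mem_inter, Finset.mem_insert]
      constructor
      · rintro ⟨ha, rfl | haK⟩
        · exact absurd ha hjbi
        · exact ⟨ha, haK⟩
      · tauto
    rw [this]
    omega

end Backward
section Forward

variable {α : Type*} [DecidableEq α] (M : FinMatroid α)

/-- The parallel class of `i`. -/
def auxCls (i : α) : Finset α := M.E.filter (fun j => M.r {i, j} ≤ 1)

lemma mem_auxCls {i j : α} : j ∈ auxCls M i ↔ j ∈ M.E ∧ M.r {i, j} ≤ 1 := by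
  simp [auxCls]

lemma mem_auxCls_self (hM : M.Loopless) {i : α} (hi : i ∈ M.E) : i ∈ auxCls M i :=
  (mem_auxCls M).2 ⟨hi, by simp [r_single M hM hi]⟩

lemma auxCls_subset (i : α) : auxCls M i ⊆ M.E := Finset.filter_subset _ _

lemma auxCls_eq (hM : M.Loopless) {i j : α} (hi : i ∈ M.E) (hj : j ∈ M.E)
    (hij : M.r {i, j} ≤ 1) : auxCls M i = auxCls M j := by
  have hji : M.r {j, i} ≤ 1 := by rwa [Finset.pair_comm]
  ext x
  rw [mem_auxCls, mem_auxCls]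
  constructor
  · rintro ⟨hx, hpx⟩
    exact ⟨hx, parallel_trans M hM hj hi hx hji hpx⟩
  · rintro ⟨hx, hpx⟩
    exact ⟨hx, parallel_trans M hM hi hj hx hij hpx⟩

lemma auxCls_block (hM : M.Loopless) {i : α} (hi : i ∈ M.E) {b : Finset α}
    (hb : b ∈ M.E.image (auxCls M)) (hib : i ∈ b) : b = auxCls M i := by
  obtain ⟨x, hx, rfl⟩ := Finset.mem_image.1 hb
  obtain ⟨hiE, hpar⟩ := (mem_auxCls M).1 hib
  exact auxCls_eq M hM hx hi hpar

lemma auxCls_card (hM : M.Loopless)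
    (hInt : IntAx M.E (fun i j K => M.CI i j K)) {i : α} (hi : i ∈ M.E) :
    (auxCls M i).card = 1 ∨ (auxCls M i).card = 2 := by
  have h1 : 1 ≤ (auxCls M i).card :=
    Finset.card_pos.2 ⟨i, mem_auxCls_self M hM hi⟩
  by_contra h
  push_neg at h
  have h3 : 2 < (auxCls M i).card := by omega
  obtain ⟨x, y, z, hx, hy, hz, hxy, hxz, hyz⟩ := Finset.two_lt_card_iff.1 h3
  obtain ⟨hxE, hpx⟩ := (mem_auxCls M).1 hx
  obtain ⟨hyE, hpy⟩ := (mem_auxCls M).1 hy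
  obtain ⟨hzE, hpz⟩ := (mem_auxCls M).1 hz
  have hxi : M.r {x, i} ≤ 1 := by rwa [Finset.pair_comm] at hpx
  have hyi : M.r {y, i} ≤ 1 := by rwa [Finset.pair_comm] at hpy
  have pxy : M.r {x, y} ≤ 1 := parallel_trans M hM hxE hi hyE hxi hpy
  have pxz : M.r {x, z} ≤ 1 := parallel_trans M hM hxE hi hzE hxi hpz
  have pyz : M.r {y, z} ≤ 1 := parallel_trans M hM hyE hi hzE hyi hpz
  exact no_three_parallel M hM hInt hxE hyE hzE hxy hxz hyz pxy pxz pyz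

lemma auxCls_disjoint (hM : M.Loopless) :
    ∀ b₁ ∈ M.E.image (auxCls M), ∀ b₂ ∈ M.E.image (auxCls M), b₁ ≠ b₂ → Disjoint b₁ b₂ := by
  intro b₁ h1 b₂ h2 hne
  rw [Finset.disjoint_left]
  intro a ha1 ha2
  obtain ⟨x, hx, rfl⟩ := Finset.mem_image.1 h1
  obtain ⟨haE, _⟩ := (mem_auxCls M).1 ha1
  exact hne ((auxCls_block M hM haE (Finset.mem_image_of_mem _ hx) ha1).trans
    (auxCls_block M hM haE h2 ha2).symm)

lemma fwd_rank_formula (hM : M.Loopless)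
    (hComp : CompAx M.E (fun i j K => M.CI i j K)) :
    ∀ S : Finset α, S ⊆ M.E →
      M.r S = ((M.E.image (auxCls M)).filter (fun b => (b ∩ S).Nonempty)).card := by
  set B := M.E.image (auxCls M) with hBdef
  have hBdisj : ∀ b₁ ∈ B, ∀ b₂ ∈ B, b₁ ≠ b₂ → Disjoint b₁ b₂ := auxCls_disjoint M hM
  intro S
  induction S using Finset.strongInduction with
  | _ S IH =>
  intro hSE
  rcases S.eq_empty_or_nonempty with rfl | ⟨i, hiS⟩
  · simp [M.r_empty]
  · have hiE : i ∈ M.E := hSE hiS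
    set S' := S.erase i with hS'def
    have hS'E : S' ⊆ M.E := (Finset.erase_subset i S).trans hSE
    have hiS' : i ∉ S' := Finset.notMem_erase i S
    have hins : insert i S' = S := Finset.insert_erase hiS
    have hbiB : auxCls M i ∈ B := Finset.mem_image_of_mem _ hiE
    have hibi : i ∈ auxCls M i := mem_auxCls_self M hM hiE
    have hcount : (B.filter (fun b => (b ∩ S).Nonempty)).card
        = (B.filter (fun b => (b ∩ S').Nonempty)).card
          + (if (auxCls M i ∩ S').Nonempty then 0 else 1) := by
      rw [← hins]
      exact count_insert hBdisj hbiB hibi S'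
    have hIH := IH S' (by rw [hS'def]; exact Finset.erase_ssubset hiS) hS'E
    by_cases hmeet : (auxCls M i ∩ S').Nonempty
    · -- i is parallel to something in S' : rank doesn't grow
      obtain ⟨j, hj⟩ := hmeet
      rw [Finset.mem_inter, mem_auxCls] at hj
      obtain ⟨⟨hjE, hpij⟩, hjS'⟩ := hj
      have hij : i ≠ j := fun h => hiS' (h ▸ hjS')
      have hrS : M.r S = M.r S' := by
        have hsub := M.r_submod (show ({i, j} : Finset α) ⊆ M.E by
          simp [Finset.insert_subset, hiE, hjE]) hS'E
        have hU : ({i, j} : Finset α) ∪ S' = S := by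
          rw [← hins]; ext a
          simp only [Finset.mem_union, Finset.mem_insert, Finset.mem_singleton]
          constructor
          · rintro ((rfl | rfl) | h) <;> simp [hjS', *] <;> exact Or.inr (Finset.mem_erase.1 ‹a ∈ S'›)
          · rintro (rfl | h) <;> tauto
        have hIn : ({j} : Finset α) ⊆ {i, j} ∩ S' := by
          simp [Finset.subset_iff, hjS']
        have h2 : 1 ≤ M.r ({i, j} ∩ S') := by
          have := M.r_mono hIn (fun a ha => hS'E (Finset.mem_inter.1 ha).2)
          rwa [r_single M hM hjE] at this
        have h3 : M.r S' ≤ M.r S := M.r_mono (by rw [← hins]; exact Finset.subset_insert i S') hSE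
        rw [hU] at hsub
        omega
      rw [hrS, hIH, hcount, if_pos ⟨j, Finset.mem_inter.2 ⟨(mem_auxCls M).2 ⟨hjE, hpij⟩, hjS'⟩⟩]
      omega
    · -- i is not parallel to anything in S' : rank grows by 1
      have hnodep : M.r (insert i S') ≠ M.r S' := by
        intro hdep
        obtain ⟨j, hjS', hpij⟩ := dep_parallel M hM hComp S' hS'E i hiE hiS' hdep
        exact hmeet ⟨j, Finset.mem_inter.2 ⟨(mem_auxCls M).2 ⟨hS'E hjS', hpij⟩, hjS'⟩⟩
      have h1 := r_insert_le M hM hiE hS'E (i := i) (A := S')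
      have h2 := r_insert_mono M hiE hS'E (i := i) (A := S')
      have hrS : M.r S = M.r S' + 1 := by rw [← hins]; omega
      rw [hrS, hIH, hcount, if_neg hmeet]

end Forward
/-- for a loopless matroid `M`, the CI-structure `[[M]]` is a
gaussoid (satisfies (SG), (Int), (Comp), (WT)) iff `M` is isomorphic to a
direct sum of copies of `U_{1,1}` and `U_{1,2}`, i.e. iff the ground set
partitions into blocks of size 1 or 2 such that the rank of any `S ⊆ E` is
the number of blocks meeting `S`. -/
theorem matroid_gaussoid_iff {α : Type*} [DecidableEq α] (M : FinMatroid α)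
    (hM : M.Loopless) :
    (SGax M.E (fun i j K => M.CI i j K) ∧ IntAx M.E (fun i j K => M.CI i j K) ∧
      CompAx M.E (fun i j K => M.CI i j K) ∧ WTAx M.E (fun i j K => M.CI i j K)) ↔
    (∃ B : Finset (Finset α),
      (∀ b ∈ B, b ⊆ M.E) ∧
      (∀ b₁ ∈ B, ∀ b₂ ∈ B, b₁ ≠ b₂ → Disjoint b₁ b₂) ∧
      B.biUnion id = M.E ∧
      (∀ b ∈ B, b.card = 1 ∨ b.card = 2) ∧
      (∀ S ⊆ M.E, M.r S = (B.filter (fun b => (b ∩ S).Nonempty)).card)) := by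
  constructor
  · -- forward direction
    rintro ⟨hSG, hInt, hComp, hWT⟩
    refine ⟨M.E.image (auxCls M), ?_, auxCls_disjoint M hM, ?_, ?_, fwd_rank_formula M hM hComp⟩
    · intro b hb
      obtain ⟨x, hx, rfl⟩ := Finset.mem_image.1 hb
      exact auxCls_subset M x
    · ext a
      simp only [Finset.mem_biUnion, id]
      constructor
      · rintro ⟨b, hb, hab⟩
        obtain ⟨x, hx, rfl⟩ := Finset.mem_image.1 hb
        exact auxCls_subset M x hab
      · intro ha
        exact ⟨auxCls M a, Finset.mem_image_of_mem _ ha, mem_auxCls_self M hM ha⟩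
    · intro b hb
      obtain ⟨x, hx, rfl⟩ := Finset.mem_image.1 hb
      exact auxCls_card M hM hInt hx
  · -- backward direction
    rintro ⟨B, hBsub, hBdisj, hBun, hBcard, hBr⟩
    have key : ∀ {i j : α} {K : Finset α}, i ∈ M.E → j ∈ M.E → i ≠ j → i ∉ K → j ∉ K →
        K ⊆ M.E → (M.CI i j K ↔ ∀ b ∈ B, i ∈ b → j ∉ b) := by
      intro i j K hi hj hij hiK hjK hK
      exact bwd_ci_iff M hBsub hBdisj hBun hBcard hBr hi hj hij hiK hjK hK
    refine ⟨?_, ?_, ?_, ?_⟩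
    · -- SG
      rintro i j ℓ K ⟨hi, hj, hl, hij, hil, hjl, hiK, hjK, hlK, hKE⟩ h1 h2
      have hijK : i ∉ insert j K := by simp [hij, hiK]
      have hljK : ℓ ∉ insert j K := by simp [Ne.symm hjl, hlK]
      have hilK : i ∉ insert ℓ K := by simp [hil, hiK]
      have hjlK : j ∉ insert ℓ K := by simp [hjl, hjK]
      have hjKE : insert j K ⊆ M.E := Finset.insert_subset hj hKE
      have hlKE : insert ℓ K ⊆ M.E := Finset.insert_subset hl hKE
      have P1 := (key hi hj hij hiK hjK hKE).1 h1
      have P2 := (key hi hl hil hijK hljK hjKE).1 h2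
      exact ⟨(key hi hl hil hiK hlK hKE).2 P2, (key hi hj hij hilK hjlK hlKE).2 P1⟩
    · -- Int
      rintro i j k L ⟨hi, hj, hk, hij, hik, hjk, hiL, hjL, hkL, hLE⟩ h1 h2
      have hikL : i ∉ insert k L := by simp [hik, hiL]
      have hjkL : j ∉ insert k L := by simp [hjk, hjL]
      have hijL : i ∉ insert j L := by simp [hij, hiL]
      have hkjL : k ∉ insert j L := by simp [Ne.symm hjk, hkL]
      have hjLE : insert j L ⊆ M.E := Finset.insert_subset hj hLE
      have hkLE : insert k L ⊆ M.E := Finset.insert_subset hk hLE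
      have P1 := (key hi hj hij hikL hjkL hkLE).1 h1
      have P2 := (key hi hk hik hijL hkjL hjLE).1 h2
      exact ⟨(key hi hj hij hiL hjL hLE).2 P1, (key hi hk hik hiL hkL hLE).2 P2⟩
    · -- Comp
      rintro i j k L ⟨hi, hj, hk, hij, hik, hjk, hiL, hjL, hkL, hLE⟩ h1 h2
      have hikL : i ∉ insert k L := by simp [hik, hiL]
      have hjkL : j ∉ insert k L := by simp [hjk, hjL]
      have hijL : i ∉ insert j L := by simp [hij, hiL]
      have hkjL : k ∉ insert j L := by simp [Ne.symm hjk, hkL]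
      have hjLE : insert j L ⊆ M.E := Finset.insert_subset hj hLE
      have hkLE : insert k L ⊆ M.E := Finset.insert_subset hk hLE
      have P1 := (key hi hj hij hiL hjL hLE).1 h1
      have P2 := (key hi hk hik hiL hkL hLE).1 h2
      exact ⟨(key hi hj hij hikL hjkL hkLE).2 P1, (key hi hk hik hijL hkjL hjLE).2 P2⟩
    · -- WT
      rintro i j k L ⟨hi, hj, hk, hij, hik, hjk, hiL, hjL, hkL, hLE⟩ h1 h2
      have P1 := (key hi hj hij hiL hjL hLE).1 h1
      by_cases hPik : ∀ b ∈ B, i ∈ b → k ∉ b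
      · exact Or.inl ((key hi hk hik hiL hkL hLE).2 hPik)
      · refine Or.inr ((key hj hk hjk hjL hkL hLE).2 ?_)
        push_neg at hPik
        obtain ⟨b₁, hb₁, hib₁, hkb₁⟩ := hPik
        intro b₂ hb₂ hjb₂ hkb₂
        have : b₁ = b₂ := block_unique hBdisj hb₁ hb₂ hkb₁ hkb₂
        exact P1 b₁ hb₁ hib₁ (this ▸ hjb₂)
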